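/- Let n ≥ 1 and let H_n be the Bleimann–Butzer–Hahn operator, H_n f(x) := (1+x)^{−n} ∑_{k=0}^n C(n,k)·x^k·f(k/(n−k+1)) for x ≥ 0. Then for all bounded continuous f, g : [0,∞) → ℝ and all x ≥ 0, |H_n(f·g)(x) − H_n f(x)·H_n g(x)| ≤ (1/2)·(1 − (1/4^n)·C(2n,n))·osc_{H_n}(f)·osc_{H_n}(g), where osc_{H_n}(f) := max{|f(k/(n−k+1)) − f(l/(n−l+1))| : 0 ≤ k < l ≤ n} and similarly for g. -/

import Mathlib

open Finset Complex

lemma sum_choose_sq (n : ℕ) : ∑ k ∈ range (n+1), (n.choose k)^2 = (2*n).choose n := by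
  rw [two_mul, Nat.add_choose_eq, Finset.Nat.sum_antidiagonal_eq_sum_range_succ
    (fun i j => n.choose i * n.choose j)]
  refine Finset.sum_congr rfl fun k hk => ?_
  rw [sq, Nat.choose_symm (by simpa using Nat.lt_succ_iff.mp (mem_range.mp hk))]

lemma geom_zero {u : ℂ} {N : ℕ} (h1 : u ^ N = 1) (h2 : u ≠ 1) :
    ∑ r ∈ range N, u ^ r = 0 := by
  have h := geom_sum_mul u N
  rw [h1, sub_self] at h
  rcases mul_eq_zero.mp h with h | h
  · exact h
  · exact absurd (sub_eq_zero.mp h) h2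

lemma rootsum_key (n : ℕ) (y : ℝ) :
    ∑ r ∈ range (2*n+1),
        ((1 + (y:ℂ) * (Complex.exp (2 * Real.pi * I / ((2*n+1:ℕ):ℂ))) ^ r) ^ n *
         (1 + (y:ℂ) * ((Complex.exp (2 * Real.pi * I / ((2*n+1:ℕ):ℂ)))⁻¹) ^ r) ^ n)
      = ((2*n+1 : ℕ) : ℂ) * ∑ k ∈ range (n+1), (n.choose k : ℂ)^2 * (y:ℂ)^(2*k) := by
  set N : ℕ := 2*n+1 with hN
  set ζ : ℂ := Complex.exp (2 * Real.pi * I / N) with hζ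
  have hprim : IsPrimitiveRoot ζ N := Complex.isPrimitiveRoot_exp N (by positivity)
  have hζN : ζ ^ N = 1 := hprim.pow_eq_one
  have hζ0 : ζ ≠ 0 := Complex.exp_ne_zero _
  set c : ℕ → ℂ := fun k => (n.choose k : ℂ) * (y:ℂ)^k with hc
  have expand : ∀ w : ℂ, (1 + (y:ℂ)*w)^n = ∑ k ∈ range (n+1), c k * w^k := by
    intro w
    rw [add_comm, add_pow]
    refine sum_congr rfl fun k _ => ?_
    simp only [hc, mul_pow, one_pow]
    ring
  calc ∑ r ∈ range N, (1 + (y:ℂ)*ζ^r)^n * (1 + (y:ℂ)*(ζ⁻¹)^r)^n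
      = ∑ r ∈ range N, ∑ k ∈ range (n+1), ∑ l ∈ range (n+1),
          (c k * c l) * (ζ^k * (ζ⁻¹)^l)^r := by
        refine sum_congr rfl fun r _ => ?_
        rw [expand, expand, Finset.sum_mul_sum]
        refine sum_congr rfl fun k _ => sum_congr rfl fun l _ => ?_
        rw [mul_pow, ← pow_mul ζ r k, ← pow_mul ζ⁻¹ r l,
          ← pow_mul ζ k r, ← pow_mul ζ⁻¹ l r, Nat.mul_comm r k, Nat.mul_comm r l]
        ring
    _ = ∑ k ∈ range (n+1), ∑ l ∈ range (n+1),
          (c k * c l) * ∑ r ∈ range N, (ζ^k * (ζ⁻¹)^l)^r := by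
        rw [Finset.sum_comm]
        refine sum_congr rfl fun k _ => ?_
        rw [Finset.sum_comm]
        exact sum_congr rfl fun l _ => (Finset.mul_sum _ _ _).symm
    _ = ∑ k ∈ range (n+1), ∑ l ∈ range (n+1),
          (if l = k then (c k * c l) * N else 0) := by
        refine sum_congr rfl fun k hk => sum_congr rfl fun l hl => ?_
        rcases eq_or_ne l k with rfl | hne
        · simp only [if_pos rfl]
          have : ζ^l * (ζ⁻¹)^l = 1 := by
            rw [inv_pow, mul_inv_cancel₀ (pow_ne_zero _ hζ0)]
          rw [this]
          simp
        · rw [if_neg hne]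
          have hu1 : (ζ^k * (ζ⁻¹)^l) ^ N = 1 := by
            rw [mul_pow, ← pow_mul, ← pow_mul, Nat.mul_comm k N, Nat.mul_comm l N,
              pow_mul, pow_mul, hζN, inv_pow, hζN]
            simp
          have hune : ζ^k * (ζ⁻¹)^l ≠ 1 := by
            intro h
            rw [inv_pow, mul_inv_eq_one₀ (pow_ne_zero _ hζ0)] at h
            have hkN : k < N := by
              have := mem_range.mp hk; omega
            have hlN : l < N := by
              have := mem_range.mp hl; omega
            exact hne (hprim.pow_inj hlN hkN h.symm)
          rw [geom_zero hu1 hune, mul_zero]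
    _ = ((N : ℕ) : ℂ) * ∑ k ∈ range (n+1), (n.choose k : ℂ)^2 * (y:ℂ)^(2*k) := by
        rw [Finset.mul_sum]
        refine sum_congr rfl fun k hk => ?_
        rw [Finset.sum_ite_eq' (range (n+1)) k (fun l => c k * c l * N), if_pos hk]
        simp only [hc]
        ring

lemma rootsum_real (n : ℕ) (y : ℝ) :
    ∑ r ∈ range (2*n+1),
        (Complex.normSq (1 + (y:ℂ) * (Complex.exp (2 * Real.pi * I / ((2*n+1:ℕ):ℂ))) ^ r)) ^ n
      = (2*n+1 : ℝ) * ∑ k ∈ range (n+1), (n.choose k : ℝ)^2 * y^(2*k) := by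
  set ζ : ℂ := Complex.exp (2 * Real.pi * I / ((2*n+1:ℕ):ℂ)) with hζ
  have habs : ‖ζ‖ = 1 := by
    rw [hζ]
    have : (2*Real.pi*I/(((2*n+1:ℕ):ℂ))) = ((2*Real.pi/(2*n+1:ℕ) : ℝ) : ℂ)*I := by
      push_cast; ring
    rw [this, Complex.norm_exp_ofReal_mul_I]
  have hconj : (starRingEnd ℂ) ζ = ζ⁻¹ := (Complex.inv_eq_conj habs).symm
  rw [← Complex.ofReal_inj]
  push_cast
  have hc : ∀ r : ℕ, (starRingEnd ℂ) (1 + (y:ℂ) * ζ ^ r) = 1 + (y:ℂ) * (ζ⁻¹) ^ r := by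
    intro r
    simp [map_add, map_mul, map_pow, Complex.conj_ofReal, hconj]
  have step : ∀ r : ℕ, ((Complex.normSq (1 + (y:ℂ)*ζ^r) : ℝ) : ℂ)^n
      = (1+(y:ℂ)*ζ^r)^n * (1+(y:ℂ)*(ζ⁻¹)^r)^n := by
    intro r
    rw [← hc r, ← mul_pow, Complex.mul_conj]
  rw [sum_congr rfl (fun r _ => step r), rootsum_key n y]
  push_cast
  ring

lemma key_ineq (n : ℕ) (x : ℝ) (hx : 0 ≤ x) :
    ((2*n).choose n : ℝ) * ((1+x)/2)^(2*n) ≤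
      ∑ k ∈ range (n+1), (n.choose k : ℝ)^2 * x^(2*k) := by
  set ζ : ℂ := Complex.exp (2 * Real.pi * I / ((2*n+1:ℕ):ℂ)) with hζ
  have habs : ‖ζ‖ = 1 := by
    rw [hζ]
    have : (2*Real.pi*I/(((2*n+1:ℕ):ℂ))) = ((2*Real.pi/(2*n+1:ℕ) : ℝ) : ℂ)*I := by
      push_cast; ring
    rw [this, Complex.norm_exp_ofReal_mul_I]
  have point : ∀ r : ℕ, (((1+x)/2)^2 * Complex.normSq (1 + ζ^r))^n ≤
      (Complex.normSq (1 + (x:ℂ)*ζ^r))^n := by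
    intro r
    have habsr : ‖ζ^r‖ = 1 := by rw [norm_pow, habs, one_pow]
    have h1 : (ζ^r).re^2 + (ζ^r).im^2 = 1 := by
      have h := Complex.normSq_apply (ζ^r)
      rw [Complex.normSq_eq_norm_sq, habsr] at h
      nlinarith [h]
    have h2 : (ζ^r).re ≤ 1 := by
      calc (ζ^r).re ≤ |(ζ^r).re| := le_abs_self _
        _ ≤ ‖ζ^r‖ := Complex.abs_re_le_norm _
        _ = 1 := habsr
    refine pow_le_pow_left₀ (mul_nonneg (by positivity) (Complex.normSq_nonneg _)) ?_ n
    simp only [Complex.normSq_apply, Complex.add_re, Complex.add_im, Complex.mul_re,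
      Complex.mul_im, Complex.ofReal_re, Complex.ofReal_im, Complex.one_re, Complex.one_im]
    nlinarith [mul_nonneg (sub_nonneg.2 h2) (sq_nonneg (1-x)), h1]
  have hsum := Finset.sum_le_sum (fun r (_ : r ∈ range (2*n+1)) => point r)
  have e1 := rootsum_real n x
  have e2 := rootsum_real n 1
  have hS1 : ∑ k ∈ range (n+1), (n.choose k : ℝ)^2 * (1:ℝ)^(2*k)
      = ((2*n).choose n : ℝ) := by
    rw [← sum_choose_sq n]
    push_cast
    simp
  rw [hS1] at e2
  simp only [Complex.ofReal_one, one_mul] at e2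
  have e3 : ∑ r ∈ range (2*n+1), (((1+x)/2)^2 * Complex.normSq (1 + ζ^r))^n
      = ((1+x)/2)^(2*n) * ((2*n+1 : ℝ) * ((2*n).choose n : ℝ)) := by
    rw [← e2, Finset.mul_sum]
    refine sum_congr rfl fun r _ => ?_
    rw [mul_pow, ← pow_mul, mul_comm]
  rw [e3, e1] at hsum
  have hpos : (0:ℝ) < 2*n+1 := by positivity
  nlinarith [hsum]

lemma gruss_identity (s : Finset ℕ) (p a b : ℕ → ℝ) (hp : ∑ k ∈ s, p k = 1) :
    ∑ k ∈ s, p k * (a k * b k) - (∑ k ∈ s, p k * a k) * (∑ k ∈ s, p k * b k)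
      = (1/2) * ∑ k ∈ s, ∑ l ∈ s, p k * p l * ((a k - a l) * (b k - b l)) := by
  have expand : ∀ k, ∑ l ∈ s, p k * p l * ((a k - a l) * (b k - b l))
      = (p k * (a k * b k)) * (∑ l ∈ s, p l) - (p k * a k) * (∑ l ∈ s, p l * b l)
        - (p k * b k) * (∑ l ∈ s, p l * a l) + p k * (∑ l ∈ s, p l * (a l * b l)) := by
    intro k
    rw [Finset.mul_sum, Finset.mul_sum, Finset.mul_sum, Finset.mul_sum,
      ← Finset.sum_sub_distrib, ← Finset.sum_sub_distrib, ← Finset.sum_add_distrib]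
    exact sum_congr rfl fun l _ => by ring
  rw [sum_congr rfl (fun k _ => expand k)]
  rw [Finset.sum_add_distrib, Finset.sum_sub_distrib, Finset.sum_sub_distrib,
    ← Finset.sum_mul, ← Finset.sum_mul, ← Finset.sum_mul, ← Finset.sum_mul, hp]
  ring

lemma gruss_bound (n : ℕ) (hn : 1 ≤ n) (p : ℕ → ℝ) (hp0 : ∀ k, 0 ≤ p k)
    (hp1 : ∑ k ∈ range (n+1), p k = 1) (A B : ℕ → ℝ) :
    |∑ k ∈ range (n+1), p k * (A k * B k) -
      (∑ k ∈ range (n+1), p k * A k) * (∑ k ∈ range (n+1), p k * B k)| ≤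
    (1/2) * (1 - ∑ k ∈ range (n+1), (p k)^2) *
      sSup {d : ℝ | ∃ k l : ℕ, k < l ∧ l ≤ n ∧ d = |A k - A l|} *
      sSup {d : ℝ | ∃ k l : ℕ, k < l ∧ l ≤ n ∧ d = |B k - B l|} := by
  set Sf := {d : ℝ | ∃ k l : ℕ, k < l ∧ l ≤ n ∧ d = |A k - A l|} with hSf
  set Sg := {d : ℝ | ∃ k l : ℕ, k < l ∧ l ≤ n ∧ d = |B k - B l|} with hSg
  have hfin : ∀ (C : ℕ → ℝ), Set.Finite {d : ℝ | ∃ k l : ℕ, k < l ∧ l ≤ n ∧ d = |C k - C l|} := by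
    intro C
    apply Set.Finite.subset (((range (n+1) ×ˢ range (n+1)).finite_toSet).image
      (fun kl : ℕ × ℕ => |C kl.1 - C kl.2|))
    rintro d ⟨k, l, hkl, hln, rfl⟩
    exact ⟨(k, l), by simp [Finset.mem_product]; omega, rfl⟩
  have hbf : BddAbove Sf := (hfin A).bddAbove
  have hbg : BddAbove Sg := (hfin B).bddAbove
  have hOf0 : 0 ≤ sSup Sf :=
    le_trans (abs_nonneg (A 0 - A 1)) (le_csSup hbf ⟨0, 1, one_pos, hn, rfl⟩)
  have hOg0 : 0 ≤ sSup Sg :=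
    le_trans (abs_nonneg (B 0 - B 1)) (le_csSup hbg ⟨0, 1, one_pos, hn, rfl⟩)
  have hmemf : ∀ k l, k ≤ n → l ≤ n → k ≠ l → |A k - A l| ≤ sSup Sf := by
    intro k l hk hl hne
    rcases lt_or_gt_of_ne hne with h | h
    · exact le_csSup hbf ⟨k, l, h, hl, rfl⟩
    · rw [abs_sub_comm]; exact le_csSup hbf ⟨l, k, h, hk, rfl⟩
  have hmemg : ∀ k l, k ≤ n → l ≤ n → k ≠ l → |B k - B l| ≤ sSup Sg := by
    intro k l hk hl hne
    rcases lt_or_gt_of_ne hne with h | h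
    · exact le_csSup hbg ⟨k, l, h, hl, rfl⟩
    · rw [abs_sub_comm]; exact le_csSup hbg ⟨l, k, h, hk, rfl⟩
  rw [gruss_identity _ p A B hp1]
  set M := sSup Sf * sSup Sg with hM
  have hM0 : 0 ≤ M := mul_nonneg hOf0 hOg0
  calc |(1/2) * ∑ k ∈ range (n+1), ∑ l ∈ range (n+1),
          p k * p l * ((A k - A l) * (B k - B l))|
      = (1/2) * |∑ k ∈ range (n+1), ∑ l ∈ range (n+1),
          p k * p l * ((A k - A l) * (B k - B l))| := by
        rw [abs_mul]; norm_num
    _ ≤ (1/2) * ∑ k ∈ range (n+1), ∑ l ∈ range (n+1),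
          |p k * p l * ((A k - A l) * (B k - B l))| := by
        refine mul_le_mul_of_nonneg_left ?_ (by norm_num)
        refine le_trans (Finset.abs_sum_le_sum_abs _ _) ?_
        exact Finset.sum_le_sum fun k _ => Finset.abs_sum_le_sum_abs _ _
    _ ≤ (1/2) * ∑ k ∈ range (n+1), ∑ l ∈ range (n+1),
          p k * p l * (if k = l then 0 else M) := by
        refine mul_le_mul_of_nonneg_left ?_ (by norm_num)
        refine Finset.sum_le_sum fun k hk => Finset.sum_le_sum fun l hl => ?_
        rcases eq_or_ne k l with rfl | hne
        · simp
        · rw [if_neg hne, abs_mul, abs_mul, _root_.abs_of_nonneg (hp0 k), _root_.abs_of_nonneg (hp0 l),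
            abs_mul]
          refine mul_le_mul_of_nonneg_left ?_ (mul_nonneg (hp0 k) (hp0 l))
          have hkn : k ≤ n := Nat.lt_succ_iff.mp (mem_range.mp hk)
          have hln : l ≤ n := Nat.lt_succ_iff.mp (mem_range.mp hl)
          exact mul_le_mul (hmemf k l hkn hln hne) (hmemg k l hkn hln hne)
            (abs_nonneg _) hOf0
    _ = (1/2) * ((1 - ∑ k ∈ range (n+1), (p k)^2) * M) := by
        congr 1
        have inner : ∀ k ∈ range (n+1),
            ∑ l ∈ range (n+1), p k * p l * (if k = l then 0 else M)
              = p k * M - (p k)^2 * M := by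
          intro k hk
          have h1 : ∀ l, p k * p l * (if k = l then 0 else M)
              = p k * p l * M - (if l = k then p k * p l * M else 0) := by
            intro l
            rcases eq_or_ne k l with rfl | hne
            · simp
            · rw [if_neg hne, if_neg (Ne.symm hne)]; ring
          rw [sum_congr rfl fun l _ => h1 l, Finset.sum_sub_distrib,
            Finset.sum_ite_eq' (range (n+1)) k (fun l => p k * p l * M), if_pos hk]
          have h2 : ∑ l ∈ range (n+1), p k * p l * M = p k * M := by
            rw [← Finset.sum_mul, ← Finset.mul_sum, hp1]; ring
          rw [h2]; ring
        rw [sum_congr rfl inner, Finset.sum_sub_distrib, ← Finset.sum_mul, ← Finset.sum_mul,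
          hp1]
        ring
    _ = (1/2) * (1 - ∑ k ∈ range (n+1), (p k)^2) * sSup Sf * sSup Sg := by
        rw [hM]; ring

/-- The `n`-th Bleimann–Butzer–Hahn operator
`H_n f(x) = (1+x)^(-n) ∑_{k=0}^n C(n,k) x^k f(k/(n-k+1))`. -/
noncomputable def bbhOp (n : ℕ) (f : ℝ → ℝ) (x : ℝ) : ℝ :=
  (1 / (1 + x) ^ n) * ∑ k ∈ Finset.range (n + 1),
    (n.choose k : ℝ) * x ^ k * f ((k : ℝ) / ((n : ℝ) - k + 1))

/-- The new Chebyshev-Grüss-type inequality for the Bleimann–Butzer–Hahn operator. -/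
theorem bbh_chebyshev_gruss (n : ℕ) (hn : 1 ≤ n)
    (f g : ℝ → ℝ)
    (hf : ContinuousOn f (Set.Ici (0:ℝ))) (hg : ContinuousOn g (Set.Ici (0:ℝ)))
    (hfb : ∃ C, ∀ y ∈ Set.Ici (0:ℝ), |f y| ≤ C) (hgb : ∃ C, ∀ y ∈ Set.Ici (0:ℝ), |g y| ≤ C)
    (x : ℝ) (hx : 0 ≤ x) :
    |bbhOp n (fun t => f t * g t) x - bbhOp n f x * bbhOp n g x| ≤
      (1 / 2) * (1 - (1 / 4 ^ n : ℝ) * ((2 * n).choose n : ℝ)) *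
        sSup {d : ℝ | ∃ k l : ℕ, k < l ∧ l ≤ n ∧
          d = |f ((k : ℝ) / ((n : ℝ) - k + 1)) - f ((l : ℝ) / ((n : ℝ) - l + 1))|} *
        sSup {d : ℝ | ∃ k l : ℕ, k < l ∧ l ≤ n ∧
          d = |g ((k : ℝ) / ((n : ℝ) - k + 1)) - g ((l : ℝ) / ((n : ℝ) - l + 1))|} := by
  have hxpos : (0:ℝ) < 1 + x := by linarith
  set p : ℕ → ℝ := fun k => (n.choose k : ℝ) * x^k / (1+x)^n with hpdef
  have hp0 : ∀ k, 0 ≤ p k := fun k => by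
    have : (0:ℝ) ≤ (n.choose k : ℝ) * x^k := by positivity
    exact div_nonneg this (le_of_lt (pow_pos hxpos n))
  have hp1 : ∑ k ∈ range (n+1), p k = 1 := by
    have hb : ∑ k ∈ range (n+1), (n.choose k:ℝ) * x^k = (1+x)^n := by
      rw [add_comm (1:ℝ) x, add_pow]
      refine sum_congr rfl fun k _ => ?_
      ring
    simp only [hpdef]
    rw [← Finset.sum_div, hb, div_self (ne_of_gt (pow_pos hxpos n))]
  set A : ℕ → ℝ := fun k => f ((k : ℝ) / ((n : ℝ) - k + 1)) with hA
  set B : ℕ → ℝ := fun k => g ((k : ℝ) / ((n : ℝ) - k + 1)) with hB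
  have hbbh : ∀ h : ℝ → ℝ, bbhOp n h x
      = ∑ k ∈ range (n+1), p k * h ((k : ℝ) / ((n : ℝ) - k + 1)) := by
    intro h
    unfold bbhOp
    rw [Finset.mul_sum]
    refine sum_congr rfl fun k _ => ?_
    rw [hpdef]
    ring
  have heq : bbhOp n (fun t => f t * g t) x - bbhOp n f x * bbhOp n g x
      = ∑ k ∈ range (n+1), p k * (A k * B k) -
        (∑ k ∈ range (n+1), p k * A k) * (∑ k ∈ range (n+1), p k * B k) := by
    rw [hbbh, hbbh, hbbh]
  rw [heq]
  have hmain := gruss_bound n hn p hp0 hp1 A B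
  refine le_trans hmain ?_
  -- now compare coefficients
  have hsq : (1 / 4 ^ n : ℝ) * ((2 * n).choose n : ℝ) ≤ ∑ k ∈ range (n+1), (p k)^2 := by
    have h := key_ineq n x hx
    have h2 : ∑ k ∈ range (n+1), (p k)^2
        = (∑ k ∈ range (n+1), (n.choose k:ℝ)^2 * x^(2*k)) / (1+x)^(2*n) := by
      rw [Finset.sum_div]
      refine sum_congr rfl fun k _ => ?_
      rw [hpdef]
      rw [div_pow, mul_pow, ← pow_mul x k 2, ← pow_mul (1+x) n 2,
        Nat.mul_comm k 2, Nat.mul_comm n 2]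
    rw [h2, le_div_iff₀ (by positivity)]
    calc (1 / 4 ^ n : ℝ) * ((2 * n).choose n : ℝ) * (1+x)^(2*n)
        = ((2*n).choose n : ℝ) * ((1+x)/2)^(2*n) := by
          rw [div_pow, show (4:ℝ)^n = 2^(2*n) by
            rw [show (4:ℝ) = 2^2 by norm_num, ← pow_mul]]
          field_simp
      _ ≤ _ := h
  -- nonnegativity of the sups
  have hfin : ∀ (C : ℕ → ℝ), Set.Finite {d : ℝ | ∃ k l : ℕ, k < l ∧ l ≤ n ∧ d = |C k - C l|} := by
    intro C
    apply Set.Finite.subset (((range (n+1) ×ˢ range (n+1)).finite_toSet).image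
      (fun kl : ℕ × ℕ => |C kl.1 - C kl.2|))
    rintro d ⟨k, l, hkl, hln, rfl⟩
    exact ⟨(k, l), by simp [Finset.mem_product]; omega, rfl⟩
  have hOf0 : 0 ≤ sSup {d : ℝ | ∃ k l : ℕ, k < l ∧ l ≤ n ∧ d = |A k - A l|} :=
    le_trans (abs_nonneg (A 0 - A 1)) (le_csSup (hfin A).bddAbove ⟨0, 1, one_pos, hn, rfl⟩)
  have hOg0 : 0 ≤ sSup {d : ℝ | ∃ k l : ℕ, k < l ∧ l ≤ n ∧ d = |B k - B l|} :=
    le_trans (abs_nonneg (B 0 - B 1)) (le_csSup (hfin B).bddAbove ⟨0, 1, one_pos, hn, rfl⟩)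
  have hcoeff : (1/2) * (1 - ∑ k ∈ range (n+1), (p k)^2)
      ≤ (1 / 2) * (1 - (1 / 4 ^ n : ℝ) * ((2 * n).choose n : ℝ)) := by
    linarith
  exact mul_le_mul_of_nonneg_right (mul_le_mul_of_nonneg_right hcoeff hOf0) hOg0
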